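/- Let A, B, X, Λ be n×n complex matrices with Λ = diag(λ₁, …, λₙ) diagonal, X and B invertible, and A·X = B·X·Λ. Let c ∈ ℂ and R > 0 satisfy |λᵢ − c| ≠ R for every i. Then (1/(2πi)) ∮_{C(c,R)} (z·B − A)⁻¹·B dz = X·Λ_Γ·X⁻¹, where the integral is over the positively oriented circle C(c,R) of radius R centered at c. -/

import Mathlib

open Matrix

open Metric Real Complex in
lemma cauchy_kernel_integral (c w : ℂ) (R : ℝ) (hR : 0 < R)
    (hw : ‖w - c‖ ≠ R) :
    (∮ z in C(c, R), (z - w)⁻¹)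
      = if ‖w - c‖ < R then (2 * Real.pi * Complex.I) else 0 := by
  rcases lt_or_gt_of_ne hw with hlt | hgt
  · rw [if_pos hlt]
    exact circleIntegral.integral_sub_inv_of_mem_ball
      (by simpa [mem_ball, Complex.dist_eq] using hlt)
  · rw [if_neg (by simpa using not_lt_of_gt hgt)]
    have hne : ∀ z ∈ closedBall c R, z - w ≠ 0 := by
      intro z hz
      rw [sub_ne_zero]
      rintro rfl
      rw [mem_closedBall, Complex.dist_eq] at hz
      exact absurd (lt_of_le_of_lt hz hgt) (lt_irrefl _)
    refine Complex.circleIntegral_eq_zero_of_differentiable_on_off_countable hR.le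
      Set.countable_empty ?_ ?_
    · exact (continuousOn_id.sub continuousOn_const).inv₀ hne
    · intro z hz
      exact (differentiableAt_id.sub_const w).inv
        (hne z (ball_subset_closedBall hz.1))

theorem stmt_3 {n : ℕ} (A B X Λ : Matrix (Fin n) (Fin n) ℂ)
    (d : Fin n → ℂ) (hΛ : Λ = Matrix.diagonal d)
    (hX : IsUnit X) (hB : IsUnit B)
    (h : A * X = B * X * Λ)
    (c : ℂ) (R : ℝ) (hR : 0 < R)
    (hsep : ∀ i, ‖d i - c‖ ≠ R) :
    ∀ i j : Fin n,
      (2 * Real.pi * Complex.I)⁻¹ *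
          (∮ z in C(c, R), (((z • B - A)⁻¹ * B) i j))
        = (X * Matrix.diagonal
              (fun i => if ‖d i - c‖ < R then (1 : ℂ) else 0)
            * X⁻¹) i j := by
  have hXd : IsUnit X.det := (Matrix.isUnit_iff_isUnit_det X).mp hX
  have hBd : IsUnit B.det := (Matrix.isUnit_iff_isUnit_det B).mp hB
  have hXinv : X * X⁻¹ = 1 := Matrix.mul_nonsing_inv X hXd
  have hXinv' : X⁻¹ * X = 1 := Matrix.nonsing_inv_mul X hXd
  have hBinv : B⁻¹ * B = 1 := Matrix.nonsing_inv_mul B hBd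
  have hA : A = B * X * Λ * X⁻¹ := by
    calc A = A * X * X⁻¹ := by rw [Matrix.mul_assoc, hXinv, Matrix.mul_one]
    _ = B * X * Λ * X⁻¹ := by rw [h]
  -- resolvent identity on the circle
  have key : ∀ z ∈ Metric.sphere c R,
      (z • B - A)⁻¹ * B = X * Matrix.diagonal (fun k => (z - d k)⁻¹) * X⁻¹ := by
    intro z hz
    have hzd : ∀ k, z - d k ≠ 0 := by
      intro k hzero
      apply hsep k
      have hzk : z = d k := by linear_combination hzero
      rw [← hzk]
      simpa [Complex.dist_eq] using hz
    have hfact : z • B - A = B * (X * Matrix.diagonal (fun k => z - d k) * X⁻¹) := by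
      have hdiag : Matrix.diagonal (fun k => z - d k)
          = z • (1 : Matrix (Fin n) (Fin n) ℂ) - Matrix.diagonal d := by
        ext a b
        by_cases hab : a = b <;>
          simp [Matrix.diagonal_apply, hab, Matrix.one_apply]
      have e1 : X * (z • (1 : Matrix (Fin n) (Fin n) ℂ) - Matrix.diagonal d) * X⁻¹
          = z • (1 : Matrix (Fin n) (Fin n) ℂ) - X * Matrix.diagonal d * X⁻¹ := by
        rw [Matrix.mul_sub, mul_smul_comm, Matrix.mul_one, Matrix.sub_mul,
          smul_mul_assoc, hXinv]
      rw [hA, hΛ, hdiag, e1, Matrix.mul_sub, mul_smul_comm, Matrix.mul_one,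
        Matrix.mul_assoc, Matrix.mul_assoc, Matrix.mul_assoc]
    have hDinv : Matrix.diagonal (fun k => (z - d k)⁻¹)
        * Matrix.diagonal (fun k => z - d k) = 1 := by
      rw [Matrix.diagonal_mul_diagonal]
      convert Matrix.diagonal_one using 2
      ext k
      exact inv_mul_cancel₀ (hzd k)
    have hinv : (z • B - A)⁻¹
        = X * Matrix.diagonal (fun k => (z - d k)⁻¹) * X⁻¹ * B⁻¹ := by
      apply Matrix.inv_eq_left_inv
      rw [hfact]
      calc X * Matrix.diagonal (fun k => (z - d k)⁻¹) * X⁻¹ * B⁻¹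
            * (B * (X * Matrix.diagonal (fun k => z - d k) * X⁻¹))
          = X * Matrix.diagonal (fun k => (z - d k)⁻¹) * X⁻¹ * (B⁻¹ * B)
            * (X * Matrix.diagonal (fun k => z - d k) * X⁻¹) := by
            simp only [Matrix.mul_assoc]
        _ = X * Matrix.diagonal (fun k => (z - d k)⁻¹) * (X⁻¹ * X)
            * Matrix.diagonal (fun k => z - d k) * X⁻¹ := by
            rw [hBinv, Matrix.mul_one]
            simp only [Matrix.mul_assoc]
        _ = X * (Matrix.diagonal (fun k => (z - d k)⁻¹)
            * Matrix.diagonal (fun k => z - d k)) * X⁻¹ := by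
            rw [hXinv', Matrix.mul_one]
            simp only [Matrix.mul_assoc]
        _ = 1 := by rw [hDinv, Matrix.mul_one, hXinv]
    rw [hinv, Matrix.mul_assoc, hBinv, Matrix.mul_one]
  intro i j
  have entry : ∀ z ∈ Metric.sphere c R,
      ((z • B - A)⁻¹ * B) i j = ∑ k, (X i k * X⁻¹ k j) * (z - d k)⁻¹ := by
    intro z hz
    rw [key z hz, Matrix.mul_apply]
    refine Finset.sum_congr rfl fun k _ => ?_
    rw [Matrix.mul_diagonal]
    ring
  rw [circleIntegral.integral_congr hR.le (fun z hz => entry z hz)]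
  have hCI : ∀ k, CircleIntegrable
      (fun z => (X i k * X⁻¹ k j) * (z - d k)⁻¹) c R := by
    intro k
    apply ContinuousOn.circleIntegrable'
    refine continuousOn_const.mul ((continuousOn_id.sub continuousOn_const).inv₀ ?_)
    intro z hz
    rw [abs_of_pos hR] at hz
    show z - d k ≠ 0
    rw [sub_ne_zero]
    rintro rfl
    exact hsep k (by simpa [Complex.dist_eq] using hz)
  have hswap : (∮ z in C(c, R), ∑ k, (X i k * X⁻¹ k j) * (z - d k)⁻¹)
      = ∑ k, ∮ z in C(c, R), (X i k * X⁻¹ k j) * (z - d k)⁻¹ := by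
    simp only [circleIntegral, Finset.smul_sum]
    exact intervalIntegral.integral_finset_sum (fun k _ => (hCI k).out)
  rw [hswap]
  have h2πi : (2 * Real.pi * Complex.I : ℂ) ≠ 0 := by
    simp [Real.pi_ne_zero, Complex.I_ne_zero, Complex.ext_iff]
  rw [Finset.mul_sum, Matrix.mul_apply]
  refine Finset.sum_congr rfl fun k _ => ?_
  rw [circleIntegral.integral_const_mul, cauchy_kernel_integral c (d k) R hR (hsep k),
    Matrix.mul_diagonal]
  split_ifs with hk
  · field_simp
    try ring
  · ring
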